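/- Under the hypotheses of the echo state theorem for contracting reservoir maps with cL_w < 1, if additionally F is Lipschitz in its second argument with constant L_z, i.e. ‖F(x, z¹) − F(x, z²)‖ ≤ L_z‖z¹−z²‖, then the induced reservoir filter U^F is Lipschitz with constant L_z / (1 − c·L_w): ‖U^F(z¹) − U^F(z²)‖_w ≤ (L_z / (1 − c L_w)) ‖z¹ − z²‖_w for all inputs z¹, z². -/

import Mathlib

open Filter
open scoped ENNReal NNReal

/-- A weighting sequence: strictly decreasing, valued in `(0,1]`, with `w 0 = 1`
and zero limit. Sequences `z : ℤ₋ → ℝⁿ` are represented as `z : ℕ → (Fin n → ℝ)`,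
where index `t : ℕ` stands for the time `-t`, so `w_{-t}` is `w t`. -/
def IsWeighting (w : ℕ → ℝ) : Prop :=
  StrictAnti w ∧ (∀ t, 0 < w t) ∧ (∀ t, w t ≤ 1) ∧ w 0 = 1 ∧
    Tendsto w atTop (nhds 0)


/-- Membership in the weighted space `ℓ^w_-`: finite weighted sup norm. -/
def memLw {E : Type*} [NormedAddCommGroup E] (w : ℕ → ℝ) (z : ℕ → E) : Prop :=
  BddAbove (Set.range fun t => ‖z t‖ * w t)

/-- The weighted norm `‖z‖_w = sup_t ‖z_t‖ w_{-t}`. -/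
noncomputable def wNorm {E : Type*} [NormedAddCommGroup E] (w : ℕ → ℝ) (z : ℕ → E) : ℝ :=
  ⨆ t, ‖z t‖ * w t

/-- If the reservoir map `F` is a contraction in the state with constant `c`,
Lipschitz in the input with constant `L_z`, and `c L_w < 1`, then the reservoir
filter `U^F` (characterized by the reservoir equation, here
`x k = F (x (k+1)) (z k)` with `k : ℕ` standing for time `-k`) is Lipschitz with
constant `L_z / (1 - c L_w)` for the weighted norms. -/
lemma memLw_sub {E : Type*} [NormedAddCommGroup E] {w : ℕ → ℝ} (hw : ∀ t, 0 ≤ w t)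
    {a b : ℕ → E} (ha : memLw w a) (hb : memLw w b) : memLw w (a - b) := by
  obtain ⟨A, hA⟩ := ha
  obtain ⟨B, hB⟩ := hb
  refine ⟨A + B, ?_⟩
  rintro r ⟨t, rfl⟩
  have h1 : ‖a t‖ * w t ≤ A := hA (Set.mem_range_self t)
  have h2 : ‖b t‖ * w t ≤ B := hB (Set.mem_range_self t)
  have h0 : ‖(a - b) t‖ ≤ ‖a t‖ + ‖b t‖ := by
    simpa using norm_sub_le (a t) (b t)
  have h3 := mul_le_mul_of_nonneg_right h0 (hw t)
  show ‖(a - b) t‖ * w t ≤ A + B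
  nlinarith


theorem reservoir_filter_lipschitz (n N : ℕ)
    (F : (Fin N → ℝ) → (Fin n → ℝ) → (Fin N → ℝ))
    (c : ℝ) (hc0 : 0 < c) (hc1 : c < 1)
    (hcontr : ∀ x1 x2 : Fin N → ℝ, ∀ z : Fin n → ℝ, ‖F x1 z - F x2 z‖ ≤ c * ‖x1 - x2‖)
    (Lz : ℝ) (hLz : ∀ x : Fin N → ℝ, ∀ z1 z2 : Fin n → ℝ,
      ‖F x z1 - F x z2‖ ≤ Lz * ‖z1 - z2‖)
    (w : ℕ → ℝ) (hw : IsWeighting w)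
    (Lw : ℝ) (hLw : ∀ t, w t / w (t + 1) ≤ Lw) (hcLw : c * Lw < 1)
    (z1 z2 : ℕ → (Fin n → ℝ)) (hz1 : memLw w z1) (hz2 : memLw w z2)
    (x1 x2 : ℕ → (Fin N → ℝ)) (hx1 : memLw w x1) (hx2 : memLw w x2)
    (hs1 : ∀ k, x1 k = F (x1 (k + 1)) (z1 k))
    (hs2 : ∀ k, x2 k = F (x2 (k + 1)) (z2 k)) :
    wNorm w (x1 - x2) ≤ (Lz / (1 - c * Lw)) * wNorm w (z1 - z2) := by
  obtain ⟨-, hwpos, -, -, -⟩ := hw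
  have hwpos' : ∀ t, 0 ≤ w t := fun t => (hwpos t).le
  have hLw0 : 0 ≤ Lw := le_trans (div_nonneg (hwpos' 0) (hwpos' 1)) (hLw 0)
  have hden : 0 < 1 - c * Lw := by linarith
  set M := max Lz 0 with hM
  have hM0 : 0 ≤ M := le_max_right _ _
  have hbx : memLw w (x1 - x2) := memLw_sub hwpos' hx1 hx2
  have hbz : memLw w (z1 - z2) := memLw_sub hwpos' hz1 hz2
  set S := wNorm w (x1 - x2) with hSdef
  set Z := wNorm w (z1 - z2) with hZdef
  have hSle : ∀ t, ‖x1 t - x2 t‖ * w t ≤ S := fun t => by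
    simpa [hSdef, wNorm] using le_ciSup hbx t
  have hZle : ∀ t, ‖z1 t - z2 t‖ * w t ≤ Z := fun t => by
    simpa [hZdef, wNorm] using le_ciSup hbz t
  have hZ0 : 0 ≤ Z :=
    le_trans (mul_nonneg (norm_nonneg _) (hwpos' 0)) (hZle 0)
  -- key inequality
  have key : S ≤ c * Lw * S + M * Z := by
    rw [hSdef, wNorm]
    refine ciSup_le fun t => ?_
    have htri : ‖x1 t - x2 t‖ ≤ c * ‖x1 (t+1) - x2 (t+1)‖ + M * ‖z1 t - z2 t‖ := by
      have e : x1 t - x2 t =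
          (F (x1 (t+1)) (z1 t) - F (x2 (t+1)) (z1 t)) +
          (F (x2 (t+1)) (z1 t) - F (x2 (t+1)) (z2 t)) := by
        rw [hs1 t, hs2 t]; ring
      calc ‖x1 t - x2 t‖ ≤ ‖F (x1 (t+1)) (z1 t) - F (x2 (t+1)) (z1 t)‖ +
            ‖F (x2 (t+1)) (z1 t) - F (x2 (t+1)) (z2 t)‖ := by
              rw [e]; exact norm_add_le _ _
        _ ≤ c * ‖x1 (t+1) - x2 (t+1)‖ + M * ‖z1 t - z2 t‖ := by
              have h1 := hcontr (x1 (t+1)) (x2 (t+1)) (z1 t)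
              have h2 := hLz (x2 (t+1)) (z1 t) (z2 t)
              have h3 : Lz * ‖z1 t - z2 t‖ ≤ M * ‖z1 t - z2 t‖ :=
                mul_le_mul_of_nonneg_right (le_max_left _ _) (norm_nonneg _)
              linarith
    have hwt : w t ≤ Lw * w (t+1) := by
      have := (div_le_iff₀ (hwpos (t+1))).mp (hLw t)
      linarith
    have hx' : ‖x1 (t+1) - x2 (t+1)‖ * w t ≤ Lw * S := by
      calc ‖x1 (t+1) - x2 (t+1)‖ * w t
          ≤ ‖x1 (t+1) - x2 (t+1)‖ * (Lw * w (t+1)) :=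
            mul_le_mul_of_nonneg_left hwt (norm_nonneg _)
        _ = Lw * (‖x1 (t+1) - x2 (t+1)‖ * w (t+1)) := by ring
        _ ≤ Lw * S := mul_le_mul_of_nonneg_left (hSle (t+1)) hLw0
    have step := mul_le_mul_of_nonneg_right htri (hwpos' t)
    have hz' : M * (‖z1 t - z2 t‖ * w t) ≤ M * Z :=
      mul_le_mul_of_nonneg_left (hZle t) hM0
    have hx'' : c * (‖x1 (t+1) - x2 (t+1)‖ * w t) ≤ c * (Lw * S) :=
      mul_le_mul_of_nonneg_left hx' hc0.le
    show ‖(x1 - x2) t‖ * w t ≤ c * Lw * S + M * Z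
    have : ‖(x1 - x2) t‖ = ‖x1 t - x2 t‖ := by simp [Pi.sub_apply]
    rw [this]
    nlinarith
  have hSM : S ≤ (M / (1 - c * Lw)) * Z := by
    rw [div_mul_eq_mul_div, le_div_iff₀ hden]
    nlinarith
  by_cases hLz0 : 0 ≤ Lz
  · have : M = Lz := max_eq_left hLz0
    rw [this] at hSM
    exact hSM
  · push_neg at hLz0
    have hzeq : ∀ t, z1 t = z2 t := by
      intro t
      have h := hLz 0 (z1 t) (z2 t)
      have hn : ‖z1 t - z2 t‖ ≤ 0 := by nlinarith [norm_nonneg (F 0 (z1 t) - F 0 (z2 t)), norm_nonneg (z1 t - z2 t)]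
      have : z1 t - z2 t = 0 := by
        rwa [← norm_le_zero_iff]
      exact sub_eq_zero.mp this
    have hZz : Z = 0 := by
      have he : (fun t => ‖(z1 - z2) t‖ * w t) = fun _ => (0 : ℝ) :=
        funext fun t => by simp [Pi.sub_apply, hzeq t]
      rw [hZdef, wNorm, he]
      exact ciSup_const
    rw [hZz, mul_zero]
    rw [hZz, mul_zero] at hSM
    exact hSM
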